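/- Let d ≥ 2, b ≥ 1, and let x, y : Fin d → ℝ and c : Fin b → ℝ all have strictly positive entries. If e_{d·b − 1}(x ⊗ c) ≥ e_{d·b − 1}(y ⊗ c), then e_{d−1}(x) · e_d(x)^{b−1} ≥ e_{d−1}(y) · e_d(y)^{b−1}. -/
import Mathlib


open Finset

/-- The `k`-th elementary symmetric polynomial of the entries of `x`. -/
noncomputable def esym {ι : Type*} [Fintype ι] (k : ℕ) (x : ι → ℝ) : ℝ :=
  ∑ S ∈ Finset.univ.powersetCard k, ∏ i ∈ S, x i

/-- Tensor (Kronecker) product of two vectors. -/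
def tensor {d₁ d₂ : ℕ} (x : Fin d₁ → ℝ) (y : Fin d₂ → ℝ) : Fin d₁ × Fin d₂ → ℝ :=
  fun p => x p.1 * y p.2

lemma esym_top_pred {ι : Type*} [Fintype ι] (z : ι → ℝ)
    (hpos : 0 < Fintype.card ι) (hz : ∀ i, z i ≠ 0) :
    esym (Fintype.card ι - 1) z = (∏ i, z i) * ∑ i, (z i)⁻¹ := by
  classical
  unfold esym
  have key : ∑ S ∈ Finset.univ.powersetCard (Fintype.card ι - 1), ∏ i ∈ S, z i
      = ∑ i : ι, ∏ j ∈ Finset.univ.erase i, z j := by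
    refine (Finset.sum_bij (fun i _ => Finset.univ.erase i) ?_ ?_ ?_ ?_).symm
    · intro i _
      rw [Finset.mem_powersetCard]
      exact ⟨Finset.erase_subset _ _, by
        rw [Finset.card_erase_of_mem (Finset.mem_univ i), Finset.card_univ]⟩
    · intro i _ j _ hij
      by_contra hne
      have h2 : Finset.univ.erase i = Finset.univ.erase j := hij
      have : i ∈ Finset.univ.erase j := Finset.mem_erase.2 ⟨hne, Finset.mem_univ i⟩
      rw [← h2] at this
      exact (Finset.notMem_erase i _) this
    · intro S hS
      rw [Finset.mem_powersetCard] at hS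
      have hcard : (Finset.univ \ S).card = 1 := by
        rw [Finset.card_sdiff_of_subset hS.1, Finset.card_univ, hS.2]
        omega
      obtain ⟨i, hi⟩ := Finset.card_eq_one.1 hcard
      refine ⟨i, Finset.mem_univ i, ?_⟩
      have : S = Finset.univ \ (Finset.univ \ S) := (Finset.sdiff_sdiff_eq_self hS.1).symm
      rw [this, hi, Finset.sdiff_singleton_eq_erase]
    · intros; rfl
  rw [key]
  rw [Finset.mul_sum]
  refine Finset.sum_congr rfl fun i _ => ?_
  have := Finset.mul_prod_erase Finset.univ z (Finset.mem_univ i)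
  rw [← this, mul_comm (z i), mul_assoc, mul_inv_cancel₀ (hz i), mul_one]

lemma esym_top {ι : Type*} [Fintype ι] (z : ι → ℝ) :
    esym (Fintype.card ι) z = ∏ i, z i := by
  unfold esym
  rw [← Finset.card_univ, Finset.powersetCard_self, Finset.sum_singleton]

theorem secondTop_catalysis (d b : ℕ) (hd : 2 ≤ d) (hb : 1 ≤ b)
    (x y : Fin d → ℝ) (c : Fin b → ℝ)
    (hx : ∀ i, 0 < x i) (hy : ∀ i, 0 < y i) (hc : ∀ j, 0 < c j)
    (h : esym (d * b - 1) (tensor x c) ≥ esym (d * b - 1) (tensor y c)) :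
    esym (d - 1) x * (esym d x) ^ (b - 1) ≥ esym (d - 1) y * (esym d y) ^ (b - 1) := by
  have hcard : Fintype.card (Fin d × Fin b) = d * b := by simp
  have expand : ∀ z : Fin d → ℝ, (∀ i, 0 < z i) →
      esym (d * b - 1) (tensor z c)
      = ((∏ i, z i) ^ b * ∑ i, (z i)⁻¹) * ((∏ j, c j) ^ d * ∑ j, (c j)⁻¹) := by
    intro z hzpos
    have hne : ∀ p : Fin d × Fin b, tensor z c p ≠ 0 := fun p =>
      (mul_pos (hzpos p.1) (hc p.2)).ne'
    have hpos : 0 < Fintype.card (Fin d × Fin b) := by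
      rw [hcard]; exact Nat.mul_pos (by omega) (by omega)
    have := esym_top_pred (tensor z c) hpos hne
    rw [hcard] at this
    rw [this]
    have hprod : (∏ p : Fin d × Fin b, tensor z c p)
        = (∏ i, z i) ^ b * (∏ j, c j) ^ d := by
      rw [Fintype.prod_prod_type]
      simp only [tensor]
      rw [Finset.prod_congr rfl (fun i _ => by
        rw [Finset.prod_mul_distrib, Finset.prod_const, Finset.card_univ, Fintype.card_fin])]
      rw [Finset.prod_mul_distrib, Finset.prod_const, Finset.card_univ, Fintype.card_fin,
        Finset.prod_pow]
    have hsum : (∑ p : Fin d × Fin b, (tensor z c p)⁻¹)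
        = (∑ i, (z i)⁻¹) * (∑ j, (c j)⁻¹) := by
      rw [Fintype.sum_prod_type]
      simp only [tensor, mul_inv]
      rw [Finset.sum_congr rfl (fun i _ => by rw [← Finset.mul_sum]),
        ← Finset.sum_mul]
    rw [hprod, hsum]
    ring
  have expand2 : ∀ z : Fin d → ℝ, (∀ i, 0 < z i) →
      esym (d - 1) z * (esym d z) ^ (b - 1)
      = (∏ i, z i) ^ b * ∑ i, (z i)⁻¹ := by
    intro z hzpos
    have h1 : esym (d - 1) z = (∏ i, z i) * ∑ i, (z i)⁻¹ := by
      have := esym_top_pred z (by simp; omega) (fun i => (hzpos i).ne')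
      rwa [Fintype.card_fin] at this
    have h2 : esym d z = ∏ i, z i := by
      have := esym_top z
      rwa [Fintype.card_fin] at this
    rw [h1, h2]
    have : (∏ i, z i) * (∏ i, z i) ^ (b - 1) = (∏ i, z i) ^ b := by
      rw [← pow_succ']
      congr 1
      omega
    rw [mul_right_comm, this]
  rw [expand x hx, expand y hy] at h
  rw [expand2 x hx, expand2 y hy]
  haveI : Nonempty (Fin b) := Fin.pos_iff_nonempty.mp (by omega)
  have hK : 0 < (∏ j, c j) ^ d * ∑ j, (c j)⁻¹ := by
    apply mul_pos
    · exact pow_pos (Finset.prod_pos (fun j _ => hc j)) d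
    · exact Finset.sum_pos (fun j _ => inv_pos.2 (hc j)) Finset.univ_nonempty
  exact le_of_mul_le_mul_right h hK
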